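/- Let V ⊆ L²(S¹,ℂⁿ) be a closed subspace with SV ⊊ V ⊆ V' where V' = Ψℋ₊ for Ψ unitary-valued a.e., and suppose SV' ⊆ V. Then there is a subspace α ⊆ ℂⁿ such that V = Ψ(α + λℋ₊), namely α is the set of zeroth Fourier coefficients of functions in Ψ^{−1}V. -/

import Mathlib

open MeasureTheory Complex
open scoped Matrix

noncomputable section

local instance : Fact (0 < 2 * Real.pi) := ⟨by positivity⟩

/-- The circle `S¹` parametrized as `ℝ/2πℤ`; the point `θ` corresponds to `λ = e^{iθ} ∈ S¹`. -/
abbrev Tc : Type := AddCircle (2 * Real.pi)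

/-- `ℂⁿ` as a Hilbert space. -/
abbrev Ecn (n : ℕ) : Type := EuclideanSpace ℂ (Fin n)

/-- The Hilbert space `L²(S¹, ℂⁿ)`. -/
abbrev H2 (n : ℕ) : Type := Lp (Ecn n) 2 (volume : Measure Tc)

/-- The Hardy space `ℋ₊ ⊂ L²(S¹,ℂⁿ)`: elements whose negative Fourier coefficients vanish. -/
def Hardy (n : ℕ) : Set (H2 n) :=
  {f | ∀ m : ℤ, m < 0 → fourierCoeff (f : Tc → Ecn n) m = 0}

/-- The subset `Φℋ₊` of `L²(S¹,ℂⁿ)`: the image of the Hardy space under pointwise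
multiplication by the matrix-valued function `Φ`. -/
def mulHardy {n : ℕ} (Φ : Tc → Matrix (Fin n) (Fin n) ℂ) : Set (H2 n) :=
  {g | ∃ f ∈ Hardy n, (g : Tc → Ecn n) =ᵐ[volume] fun θ =>
    (WithLp.equiv 2 (∀ _ : Fin n, ℂ)).symm
      ((Φ θ).mulVec (WithLp.equiv 2 (∀ _ : Fin n, ℂ) ((f : Tc → Ecn n) θ)))}

/-! ### Auxiliary lemmas -/

local notation "μH" => (@AddCircle.haarAddCircle (2*Real.pi) (Fact.mk (by positivity)))

lemma ae_vol_iff_haar {P : Tc → Prop} :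
    (∀ᵐ θ ∂(volume : Measure Tc), P θ) ↔ (∀ᵐ θ ∂μH, P θ) := by
  rw [AddCircle.volume_eq_smul_haarAddCircle,
    Measure.ae_ennreal_smul_measure_iff (by simp [Real.pi_pos])]

lemma aesm_haar {E : Type*} [TopologicalSpace E] [TopologicalSpace.PseudoMetrizableSpace E]
    {f : Tc → E}
    (h : AEStronglyMeasurable f (volume : Measure Tc)) : AEStronglyMeasurable f μH :=
  ⟨h.mk f, h.stronglyMeasurable_mk, ae_vol_iff_haar.mp h.ae_eq_mk⟩

lemma integrable_haar {n : ℕ} (f : H2 n) : Integrable (f : Tc → Ecn n) μH := by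
  have h := Lp.memLp f
  have heq : μH = (ENNReal.ofReal (2*Real.pi))⁻¹ • (volume : Measure Tc) := by
    rw [AddCircle.volume_eq_smul_haarAddCircle, smul_smul,
      ENNReal.inv_mul_cancel (by simp [Real.pi_pos]) ENNReal.ofReal_ne_top, one_smul]
  have h2 : MemLp (⇑f) 2 μH := heq ▸ h.smul_measure (by simp [Real.pi_pos])
  exact h2.integrable (by norm_num)

lemma integrable_fourier_smul {n : ℕ} (f : H2 n) (m : ℤ) :
    Integrable (fun θ : Tc => fourier m θ • (f : Tc → Ecn n) θ) μH := by
  refine ((integrable_haar f).norm.mono' ?_ ?_)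
  · exact (Continuous.aestronglyMeasurable (map_continuous (@fourier (2*Real.pi) m))).smul
      (aesm_haar (Lp.aestronglyMeasurable f))
  · refine Filter.Eventually.of_forall fun θ => ?_
    rw [norm_smul]
    simp [Circle.norm_coe]

lemma fourierCoeff_congr_ae' {n : ℕ} {f g : Tc → Ecn n}
    (h : f =ᵐ[(volume : Measure Tc)] g) (m : ℤ) :
    fourierCoeff f m = fourierCoeff g m := by
  unfold fourierCoeff
  exact integral_congr_ae ((ae_vol_iff_haar.mp h).mono fun θ hθ => by simp only [hθ])

lemma fourierCoeff_zero' {n : ℕ} (m : ℤ) : fourierCoeff ((0 : H2 n) : Tc → Ecn n) m = 0 := by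
  rw [fourierCoeff_congr_ae' (Lp.coeFn_zero (Ecn n) 2 (volume : Measure Tc)) m]
  unfold fourierCoeff
  simp

lemma fourierCoeff_sub' {n : ℕ} (f g : H2 n) (m : ℤ) :
    fourierCoeff ((f - g : H2 n) : Tc → Ecn n) m
      = fourierCoeff (f : Tc → Ecn n) m - fourierCoeff (g : Tc → Ecn n) m := by
  rw [fourierCoeff_congr_ae' (Lp.coeFn_sub f g) m]
  unfold fourierCoeff
  rw [← integral_sub (integrable_fourier_smul f (-m)) (integrable_fourier_smul g (-m))]
  congr 1; funext θ; simp [smul_sub]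

lemma fourierCoeff_add' {n : ℕ} (f g : H2 n) (m : ℤ) :
    fourierCoeff ((f + g : H2 n) : Tc → Ecn n) m
      = fourierCoeff (f : Tc → Ecn n) m + fourierCoeff (g : Tc → Ecn n) m := by
  rw [fourierCoeff_congr_ae' (Lp.coeFn_add f g) m]
  unfold fourierCoeff
  rw [← integral_add (integrable_fourier_smul f (-m)) (integrable_fourier_smul g (-m))]
  congr 1; funext θ; simp [smul_add]

lemma fourierCoeff_smul' {n : ℕ} (c : ℂ) (f : H2 n) (m : ℤ) :
    fourierCoeff ((c • f : H2 n) : Tc → Ecn n) m = c • fourierCoeff (f : Tc → Ecn n) m := by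
  rw [fourierCoeff_congr_ae' (Lp.coeFn_smul c f) m]
  unfold fourierCoeff
  rw [← integral_smul]
  congr 1; funext θ
  rw [Pi.smul_apply, smul_comm]

lemma fourierCoeff_conj_smul {n : ℕ} (w : Tc → Ecn n) (m : ℤ) :
    fourierCoeff (fun θ : Tc => (starRingEnd ℂ) (AddCircle.toCircle θ : ℂ) • w θ) m
      = fourierCoeff w (m + 1) := by
  unfold fourierCoeff
  congr 1; funext θ
  rw [smul_smul]
  congr 1
  rw [show (starRingEnd ℂ) (AddCircle.toCircle θ : ℂ) = fourier (-1) θ by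
      rw [fourier_neg, fourier_one],
    ← fourier_add]
  congr 1
  ring_nf

lemma norm_symm_mulVec {n : ℕ} {A : Matrix (Fin n) (Fin n) ℂ}
    (hA : A ∈ Matrix.unitaryGroup (Fin n) ℂ) (v : Fin n → ℂ) :
    ‖(WithLp.equiv 2 (∀ _ : Fin n, ℂ)).symm (A.mulVec v)‖
      = ‖(WithLp.equiv 2 (∀ _ : Fin n, ℂ)).symm v‖ := by
  have key : ∀ u : Fin n → ℂ,
      ‖(WithLp.equiv 2 (∀ _ : Fin n, ℂ)).symm u‖ = Real.sqrt (re (star u ⬝ᵥ u)) := by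
    intro u
    rw [EuclideanSpace.norm_eq]
    congr 1
    rw [dotProduct, Complex.re_sum]
    refine Finset.sum_congr rfl fun i _ => ?_
    rw [WithLp.equiv_symm_apply, PiLp.toLp_apply, Pi.star_apply, RCLike.star_def, mul_comm, mul_conj]
    rw [← Complex.sq_norm]
    norm_cast
  have h2 : star (A.mulVec v) ⬝ᵥ (A.mulVec v) = star v ⬝ᵥ v := by
    rw [Matrix.star_mulVec, Matrix.dotProduct_mulVec, Matrix.vecMul_vecMul,
      ← Matrix.star_eq_conjTranspose, Matrix.mem_unitaryGroup_iff'.mp hA, Matrix.vecMul_one]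
  rw [key, key, h2]

lemma inv_mulVec_mulVec {n : ℕ} {A : Matrix (Fin n) (Fin n) ℂ}
    (hA : A ∈ Matrix.unitaryGroup (Fin n) ℂ) (v : Fin n → ℂ) :
    A⁻¹.mulVec (A.mulVec v) = v := by
  have h1 : A⁻¹ = star A := Matrix.inv_eq_right_inv (Matrix.mem_unitaryGroup_iff.mp hA)
  rw [h1, Matrix.mulVec_mulVec, Matrix.mem_unitaryGroup_iff'.mp hA, Matrix.one_mulVec]

lemma aesm_mulVec {n : ℕ} (Ψ : Tc → Matrix (Fin n) (Fin n) ℂ)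
    (hmeas : ∀ i j : Fin n, Measurable fun θ => Ψ θ i j) (h : H2 n) :
    AEStronglyMeasurable (fun θ : Tc =>
      (WithLp.equiv 2 (∀ _ : Fin n, ℂ)).symm
        ((Ψ θ).mulVec (WithLp.equiv 2 (∀ _ : Fin n, ℂ) ((h : Tc → Ecn n) θ))))
      (volume : Measure Tc) := by
  have hsm := Lp.aestronglyMeasurable h
  set mk := hsm.mk (h : Tc → Ecn n) with hmk
  have hmkSM : StronglyMeasurable mk := hsm.stronglyMeasurable_mk
  have hcomp : ∀ j : Fin n, Measurable fun θ : Tc => mk θ j := by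
    intro j
    have hc : Continuous fun x : Ecn n => x j :=
      (PiLp.proj (𝕜 := ℂ) 2 (fun _ : Fin n => ℂ) j).continuous
    exact (hc.comp_stronglyMeasurable hmkSM).measurable
  have hG : Measurable (fun θ : Tc => (Ψ θ).mulVec (WithLp.equiv 2 (∀ _ : Fin n, ℂ) (mk θ))) := by
    rw [measurable_pi_iff]
    intro i
    simp only [Matrix.mulVec, dotProduct]
    exact Finset.measurable_sum _ fun j _ => ((hmeas i j).mul (hcomp j))
  refine ⟨fun θ => (WithLp.equiv 2 (∀ _ : Fin n, ℂ)).symm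
      ((Ψ θ).mulVec (WithLp.equiv 2 (∀ _ : Fin n, ℂ) (mk θ))),
    (PiLp.continuous_toLp 2 (fun _ : Fin n => ℂ)).comp_stronglyMeasurable
      hG.stronglyMeasurable, ?_⟩
  filter_upwards [hsm.ae_eq_mk] with θ hθ
  rw [hθ]

/- STATEMENT 13: Let V ⊆ L²(S¹,ℂⁿ) be a closed subspace with SV ⊊ V ⊆ V' where V' = Ψℋ₊
for Ψ unitary-valued a.e., and suppose SV' ⊆ V. Then there is a subspace α ⊆ ℂⁿ such that
V = Ψ(α + λℋ₊), namely α is the set of zeroth Fourier coefficients of functions in Ψ^{−1}V. -/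

theorem sandwiched_shift_invariant_subspace_form
    (n : ℕ)
    (S : H2 n →L[ℂ] H2 n)
    (hS : ∀ f : H2 n, (S f : Tc → Ecn n) =ᵐ[volume]
      fun θ => (AddCircle.toCircle θ : ℂ) • (f : Tc → Ecn n) θ)
    (Ψ : Tc → Matrix (Fin n) (Fin n) ℂ)
    (hmeas : ∀ i j : Fin n, Measurable fun θ => Ψ θ i j)
    (hunit : ∀ᵐ θ ∂(volume : Measure Tc), Ψ θ ∈ Matrix.unitaryGroup (Fin n) ℂ)
    (V : Submodule ℂ (H2 n)) (hVclosed : IsClosed (V : Set (H2 n)))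
    (hSV : (⇑S '' (V : Set (H2 n))) ⊂ (V : Set (H2 n)))
    (hVV' : (V : Set (H2 n)) ⊆ mulHardy Ψ)
    (hSV' : ∀ g ∈ mulHardy Ψ, S g ∈ V) :
    ∃ α : Submodule ℂ (Ecn n),
      ((V : Set (H2 n)) = {g : H2 n | ∃ f ∈ Hardy n,
        fourierCoeff (f : Tc → Ecn n) 0 ∈ α ∧
        (g : Tc → Ecn n) =ᵐ[volume] fun θ =>
          (WithLp.equiv 2 (∀ _ : Fin n, ℂ)).symm
            ((Ψ θ).mulVec (WithLp.equiv 2 (∀ _ : Fin n, ℂ) ((f : Tc → Ecn n) θ)))}) ∧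
      (∀ c : Ecn n, c ∈ α ↔ ∃ f : H2 n,
        (∃ g ∈ V, (f : Tc → Ecn n) =ᵐ[volume] fun θ =>
          (WithLp.equiv 2 (∀ _ : Fin n, ℂ)).symm
            ((Ψ θ)⁻¹.mulVec (WithLp.equiv 2 (∀ _ : Fin n, ℂ) ((g : Tc → Ecn n) θ)))) ∧
        fourierCoeff (f : Tc → Ecn n) 0 = c) := by
  classical
  -- the subspace α
  let αset : Set (Ecn n) := {c : Ecn n | ∃ f : H2 n,
    (∃ g ∈ V, (f : Tc → Ecn n) =ᵐ[volume] fun θ =>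
      (WithLp.equiv 2 (∀ _ : Fin n, ℂ)).symm
        ((Ψ θ)⁻¹.mulVec (WithLp.equiv 2 (∀ _ : Fin n, ℂ) ((g : Tc → Ecn n) θ)))) ∧
    fourierCoeff (f : Tc → Ecn n) 0 = c}
  refine ⟨{ carrier := αset, add_mem' := ?_, zero_mem' := ?_, smul_mem' := ?_ }, ?_,
    fun c => Iff.rfl⟩
  · rintro a b ⟨f₁, ⟨g₁, hg₁, he₁⟩, hc₁⟩ ⟨f₂, ⟨g₂, hg₂, he₂⟩, hc₂⟩
    refine ⟨f₁ + f₂, ⟨g₁ + g₂, V.add_mem hg₁ hg₂, ?_⟩, by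
      rw [fourierCoeff_add', hc₁, hc₂]⟩
    filter_upwards [Lp.coeFn_add f₁ f₂, Lp.coeFn_add g₁ g₂, he₁, he₂] with θ h1 h2 h3 h4
    rw [h1, Pi.add_apply, h3, h4, h2, Pi.add_apply]
    simp only [WithLp.equiv_apply, WithLp.equiv_symm_apply, WithLp.ofLp_add, Matrix.mulVec_add,
      WithLp.toLp_add]
  · refine ⟨0, ⟨0, V.zero_mem, ?_⟩, fourierCoeff_zero' 0⟩
    filter_upwards [Lp.coeFn_zero (Ecn n) 2 (volume : Measure Tc)] with θ h1
    rw [h1]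
    simp only [Pi.zero_apply]
    rw [show (WithLp.equiv 2 (∀ _ : Fin n, ℂ)) (0 : Ecn n) = 0 from rfl, Matrix.mulVec_zero]
    rfl
  · rintro c a ⟨f₁, ⟨g₁, hg₁, he₁⟩, hc₁⟩
    refine ⟨c • f₁, ⟨c • g₁, V.smul_mem c hg₁, ?_⟩, by
      rw [fourierCoeff_smul', hc₁]⟩
    filter_upwards [Lp.coeFn_smul c f₁, Lp.coeFn_smul c g₁, he₁] with θ h1 h2 h3
    rw [h1, Pi.smul_apply, h3, h2, Pi.smul_apply]
    simp only [WithLp.equiv_apply, WithLp.equiv_symm_apply, WithLp.ofLp_smul, Matrix.mulVec_smul,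
      WithLp.toLp_smul]
  -- the set equality
  · ext g
    simp only [Set.mem_setOf_eq, SetLike.mem_coe]
    constructor
    · intro hg
      obtain ⟨f, hfH, hfe⟩ := hVV' hg
      refine ⟨f, hfH, ⟨f, ⟨g, hg, ?_⟩, rfl⟩, hfe⟩
      filter_upwards [hfe, hunit] with θ h1 h2
      rw [h1, Equiv.apply_symm_apply, inv_mulVec_mulVec h2, Equiv.symm_apply_apply]
    · rintro ⟨f, hfH, ⟨f₀, ⟨g₀, hg₀V, hf₀e⟩, hf₀c⟩, hge⟩
      obtain ⟨f₁, hf₁H, hg₀e⟩ := hVV' hg₀V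
      have hf₀₁ : (f₀ : Tc → Ecn n) =ᵐ[volume] (f₁ : Tc → Ecn n) := by
        filter_upwards [hf₀e, hg₀e, hunit] with θ h1 h2 h3
        rw [h1, h2, Equiv.apply_symm_apply, inv_mulVec_mulVec h3, Equiv.symm_apply_apply]
      have hc10 : fourierCoeff (f₁ : Tc → Ecn n) 0 = fourierCoeff (f : Tc → Ecn n) 0 := by
        rw [← fourierCoeff_congr_ae' hf₀₁ 0, hf₀c]
      set w : H2 n := f - f₁ with hw
      have hwc : ∀ m : ℤ, m ≤ 0 → fourierCoeff (w : Tc → Ecn n) m = 0 := by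
        intro m hm
        rw [hw, fourierCoeff_sub']
        rcases lt_or_eq_of_le hm with hlt | heq0
        · rw [hfH m hlt, hf₁H m hlt, sub_zero]
        · rw [heq0, hc10, sub_self]
      -- construct h = λ̄ • w
      set F₁ : Tc → Ecn n := fun θ =>
        (starRingEnd ℂ) (AddCircle.toCircle θ : ℂ) • (w : Tc → Ecn n) θ with hF₁
      have hF₁sm : AEStronglyMeasurable F₁ (volume : Measure Tc) := by
        refine AEStronglyMeasurable.smul (f := fun θ : Tc => (starRingEnd ℂ) (AddCircle.toCircle θ : ℂ))
          (g := (w : Tc → Ecn n)) ?_ (Lp.aestronglyMeasurable w)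
        exact (Complex.continuous_conj.comp
          (continuous_induced_dom.comp AddCircle.continuous_toCircle)).aestronglyMeasurable
      have hF₁mem : MemLp F₁ 2 (volume : Measure Tc) := by
        refine (Lp.memLp w).of_le hF₁sm ?_
        refine Filter.Eventually.of_forall fun θ => le_of_eq ?_
        rw [hF₁, norm_smul]
        simp [Circle.norm_coe]
      set h : H2 n := hF₁mem.toLp F₁ with hhdef
      have hhe : (h : Tc → Ecn n) =ᵐ[volume] F₁ := hF₁mem.coeFn_toLp
      have hHardy : h ∈ Hardy n := by
        intro m hm
        rw [fourierCoeff_congr_ae' hhe m, hF₁, fourierCoeff_conj_smul]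
        exact hwc (m + 1) (by omega)
      -- construct u = Ψ h
      set F₂ : Tc → Ecn n := fun θ =>
        (WithLp.equiv 2 (∀ _ : Fin n, ℂ)).symm
          ((Ψ θ).mulVec (WithLp.equiv 2 (∀ _ : Fin n, ℂ) ((h : Tc → Ecn n) θ))) with hF₂
      have hF₂sm : AEStronglyMeasurable F₂ (volume : Measure Tc) := aesm_mulVec Ψ hmeas h
      have hF₂mem : MemLp F₂ 2 (volume : Measure Tc) := by
        refine (Lp.memLp h).of_le hF₂sm ?_
        filter_upwards [hunit] with θ hθ
        refine le_of_eq ?_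
        rw [hF₂]
        simp only []
        rw [norm_symm_mulVec hθ, Equiv.symm_apply_apply]
      set u : H2 n := hF₂mem.toLp F₂ with hudef
      have hue : (u : Tc → Ecn n) =ᵐ[volume] F₂ := hF₂mem.coeFn_toLp
      have huH : u ∈ mulHardy Ψ := ⟨h, hHardy, hue⟩
      have hSu : S u ∈ V := hSV' u huH
      have hkey : g = g₀ + S u := by
        apply Lp.ext
        filter_upwards [Lp.coeFn_add g₀ (S u), hS u, hue, hhe, Lp.coeFn_sub f f₁, hge, hg₀e]
          with θ h1 h2 h3 h4 h5 h6 h7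
        rw [h1, Pi.add_apply, h2, h3, hF₂]
        beta_reduce
        rw [h4, hF₁]
        beta_reduce
        rw [h5, Pi.sub_apply, h6, h7]
        simp only [WithLp.equiv_apply, WithLp.equiv_symm_apply, WithLp.ofLp_smul,
          Matrix.mulVec_smul, WithLp.toLp_smul]
        rw [smul_smul, mul_conj]
        rw [show Complex.normSq (AddCircle.toCircle θ : ℂ) = 1 from Circle.normSq_coe _]
        rw [Complex.ofReal_one, one_smul]
        simp only [WithLp.ofLp_sub, Matrix.mulVec_sub, WithLp.toLp_sub]
        abel
      rw [hkey]
      exact V.add_mem hg₀V hSu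

end
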